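/- Fix a finite set I of students, a finite set S of schools, schools' preferences, quotas, and a k-degenerate student acquaintance graph G. Then there exists a mechanism (a function assigning a feasible matching to every profile of students' strict linear orders on S ∪ {∅}) that is strategyproof and whose output matching is Pareto efficient and locally EF-k for every profile of students' preferences. -/

import Mathlib

section Defs

variable {I S : Type*}

/-- Students' preference profiles: `pI i a b` means student `i` strictly prefers option `a`
to option `b`, where `none` represents being unmatched. -/
abbrev StudentPrefs (I S : Type*) := I → Option S → Option S → Prop

/-- Schools' preference profiles: `pS s a b` means school `s` strictly prefers `a` to `b`,
where `none` represents leaving a seat vacant. -/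
abbrev SchoolPrefs (I S : Type*) := S → Option I → Option I → Prop

/-- Each student's preference is a strict linear order on `S ∪ {∅}`. -/
def ValidStudentPrefs (pI : StudentPrefs I S) : Prop :=
  ∀ i, IsStrictTotalOrder (Option S) (pI i)

/-- Each school's preference is a strict linear order on `I ∪ {∅}`. -/
def ValidSchoolPrefs (pS : SchoolPrefs I S) : Prop :=
  ∀ s, IsStrictTotalOrder (Option I) (pS s)

/-- A matching `μ : I → Option S` is feasible if each school's quota is respected. -/
def Feasible (q : S → ℕ) (μ : I → Option S) : Prop :=
  ∀ s : S, {i | μ i = some s}.ncard ≤ q s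

/-- Student `i` has justified envy toward student `i'` in matching `μ`. -/
def JEnvy (pI : StudentPrefs I S) (pS : SchoolPrefs I S)
    (μ : I → Option S) (i i' : I) : Prop :=
  ∃ s : S, μ i' = some s ∧ pI i (some s) (μ i) ∧ pS s (some i) (some i')

/-- Local envy: justified envy toward a neighbor in the student acquaintance graph `G`. -/
def LocalEnvy (G : SimpleGraph I) (pI : StudentPrefs I S) (pS : SchoolPrefs I S)
    (μ : I → Option S) (i i' : I) : Prop :=
  JEnvy pI pS μ i i' ∧ G.Adj i i'

/-- Locally envy-free matching. -/
def LEF (G : SimpleGraph I) (pI : StudentPrefs I S) (pS : SchoolPrefs I S)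
    (μ : I → Option S) : Prop :=
  ∀ i i', ¬ LocalEnvy G pI pS μ i i'

/-- Fair (justified-envy-free) matching. -/
def Fair (pI : StudentPrefs I S) (pS : SchoolPrefs I S) (μ : I → Option S) : Prop :=
  ∀ i i', ¬ JEnvy pI pS μ i i'

/-- Locally envy-free up to `k` peers: every student has local envy toward at most `k` students. -/
def LocEF (G : SimpleGraph I) (pI : StudentPrefs I S) (pS : SchoolPrefs I S)
    (k : ℕ) (μ : I → Option S) : Prop :=
  ∀ i, {i' | LocalEnvy G pI pS μ i i'}.ncard ≤ k

/-- Locally envy-receiving-free up to `k` peers: for every student at most `k` students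
have local envy toward her. -/
def LocERF (G : SimpleGraph I) (pI : StudentPrefs I S) (pS : SchoolPrefs I S)
    (k : ℕ) (μ : I → Option S) : Prop :=
  ∀ i, {i' | LocalEnvy G pI pS μ i' i}.ncard ≤ k

/-- `μ'` Pareto dominates `μ`. -/
def Dominates (pI : StudentPrefs I S) (μ' μ : I → Option S) : Prop :=
  (∀ i, μ' i = μ i ∨ pI i (μ' i) (μ i)) ∧ (∃ i, pI i (μ' i) (μ i))

/-- A feasible matching is Pareto efficient if no feasible matching Pareto dominates it. -/
def ParetoEfficient (pI : StudentPrefs I S) (q : S → ℕ) (μ : I → Option S) : Prop :=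
  ∀ μ', Feasible q μ' → ¬ Dominates pI μ' μ

/-- `(i, s)` is a mutually-best pair. -/
def MBPair (pI : StudentPrefs I S) (pS : SchoolPrefs I S) (i : I) (s : S) : Prop :=
  (∀ x : Option S, x ≠ some s → pI i (some s) x) ∧
  (∀ y : Option I, y ≠ some i → pS s (some i) y)

/-- A matching is mutually-best if every mutually-best pair is matched. -/
def MutuallyBest (pI : StudentPrefs I S) (pS : SchoolPrefs I S) (μ : I → Option S) : Prop :=
  ∀ i s, MBPair pI pS i s → μ i = some s

/-- The set of the `m` most-preferred elements under a strict order `r`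
(`r j i` meaning `j` is strictly preferred to `i`). -/
def topSet (r : I → I → Prop) (m : ℕ) : Set I := {i | {j | r j i}.ncard < m}

/-- A strict linear order on `I` is single-peaked on the graph `G` if for each
`m ∈ {1, …, |I|}` the set of the `m` most-preferred elements induces a connected
subgraph of `G`. -/
def SinglePeakedOn (G : SimpleGraph I) (r : I → I → Prop) : Prop :=
  ∀ m : ℕ, 1 ≤ m → m ≤ Nat.card I → (G.induce (topSet r m)).Connected

/-- `(T, bag)` is a tree decomposition of `G`. -/
structure IsTreeDecomp {V : Type*} (G : SimpleGraph I) (T : SimpleGraph V)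
    (bag : V → Set I) : Prop where
  tree : T.IsTree
  covers : ∀ i : I, ∃ t, i ∈ bag t
  subtree : ∀ i : I, (T.induce {t | i ∈ bag t}).Connected
  edges : ∀ ⦃i i' : I⦄, G.Adj i i' → ∃ t, i ∈ bag t ∧ i' ∈ bag t

/-- `G` has treewidth at most `k`: it admits a tree decomposition of width at most `k`. -/
def TreewidthAtMost (G : SimpleGraph I) (k : ℕ) : Prop :=
  ∃ (V : Type) (T : SimpleGraph V) (bag : V → Set I),
    Finite V ∧ IsTreeDecomp G T bag ∧ ∀ t, (bag t).ncard ≤ k + 1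

/-- `G` is `k`-degenerate: there is a linear ordering of the vertices (an injection
into `ℕ`) such that every vertex has at most `k` neighbors occurring strictly later. -/
def Degenerate (G : SimpleGraph I) (k : ℕ) : Prop :=
  ∃ ord : I → ℕ, Function.Injective ord ∧
    ∀ i, {i' | G.Adj i i' ∧ ord i < ord i'}.ncard ≤ k

/-- The first index `j` in the list `L` of bags such that `i ∈ bag (L.get j)`. -/
noncomputable def firstBagIdx {V : Type*} (L : List V) (bag : V → Set I) (i : I) : ℕ :=
  sInf {j | ∃ h : j < L.length, i ∈ bag (L.get ⟨j, h⟩)}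

/-- A strict linear order on `I` is single-peaked on a tree decomposition `(T, bag)` if
there is a sequence of nodes covering all vertices, each node after the first adjacent in
`T` to an earlier one, such that vertices first covered earlier are preferred. -/
def SinglePeakedOnTD {V : Type*} (T : SimpleGraph V) (bag : V → Set I)
    (r : I → I → Prop) : Prop :=
  ∃ L : List V,
    (∀ i : I, ∃ j : ℕ, ∃ h : j < L.length, i ∈ bag (L.get ⟨j, h⟩)) ∧
    (∀ j : ℕ, ∀ h : j < L.length, 1 ≤ j →
      ∃ j' : ℕ, ∃ h' : j' < L.length, j' < j ∧ T.Adj (L.get ⟨j', h'⟩) (L.get ⟨j, h⟩)) ∧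
    (∀ i i' : I, firstBagIdx L bag i < firstBagIdx L bag i' → r i i')

/-- `(i, s)` is a blocking pair for the feasible matching `μ`. -/
def BlockingPair (pI : StudentPrefs I S) (pS : SchoolPrefs I S) (q : S → ℕ)
    (μ : I → Option S) (i : I) (s : S) : Prop :=
  μ i ≠ some s ∧ pI i (some s) (μ i) ∧
  (({i' | μ i' = some s}.ncard < q s ∧ pS s (some i) none) ∨
   ({i' | μ i' = some s}.ncard = q s ∧
     ∃ i₀, μ i₀ = some s ∧
       (∀ i₁, μ i₁ = some s → i₁ = i₀ ∨ pS s (some i₁) (some i₀)) ∧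
       pS s (some i) (some i₀)))

/-- A matching is locally stable if for every blocking pair `(i, s)`, no neighbor of `i`
is matched to `s`. -/
def LocallyStable (G : SimpleGraph I) (pI : StudentPrefs I S) (pS : SchoolPrefs I S)
    (q : S → ℕ) (μ : I → Option S) : Prop :=
  ∀ i s, BlockingPair pI pS q μ i s → ∀ i', G.Adj i i' → μ i' ≠ some s

/-- Strategyproofness of a mechanism `f` (the schools' side being fixed). -/
def Strategyproof (f : StudentPrefs I S → (I → Option S)) : Prop :=
  ∀ pI : StudentPrefs I S, ValidStudentPrefs pI → ∀ i : I,
    ∀ pI' : StudentPrefs I S, ValidStudentPrefs pI' →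
      (∀ i'' : I, i'' ≠ i → pI' i'' = pI i'') →
      f pI i = f pI' i ∨ pI i (f pI i) (f pI' i)

end Defs

section Aux

variable {I S : Type*} [Fintype I] [Fintype S]

open Classical in
/-- Available options: unmatched, or any school with positive remaining quota. -/
noncomputable def avail (q' : S → ℕ) : Finset (Option S) :=
  insert none ((Finset.univ.filter fun s => 0 < q' s).image some)

lemma none_mem_avail (q' : S → ℕ) : (none : Option S) ∈ avail q' := by
  classical
  simp [avail]

lemma some_mem_avail {q' : S → ℕ} {s : S} : some s ∈ avail q' ↔ 0 < q' s := by
  classical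
  simp [avail]

lemma exists_rmax {α : Type*} (r : α → α → Prop) (hto : IsStrictTotalOrder α r)
    (A : Finset α) (hA : A.Nonempty) : ∃ a ∈ A, ∀ b ∈ A, b ≠ a → r a b := by
  classical
  haveI := hto
  induction hA using Finset.Nonempty.cons_induction with
  | singleton a => exact ⟨a, Finset.mem_singleton_self a, by simp⟩
  | cons a s ha hs ih =>
    obtain ⟨m, hm, hmax⟩ := ih
    rcases trichotomous_of r a m with h | h | h
    · refine ⟨a, Finset.mem_cons_self a s, ?_⟩
      intro b hb hba
      rcases Finset.mem_cons.mp hb with rfl | hb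
      · exact absurd rfl hba
      · by_cases hbm : b = m
        · exact hbm ▸ h
        · exact _root_.trans_of r h (hmax b hb hbm)
    · subst h; exact absurd hm ha
    · refine ⟨m, Finset.mem_cons.mpr (Or.inr hm), ?_⟩
      intro b hb hbm
      rcases Finset.mem_cons.mp hb with rfl | hb
      · exact h
      · exact hmax b hb hbm

open Classical in
noncomputable def pick (r : Option S → Option S → Prop) (A : Finset (Option S)) : Option S :=
  if h : ∃ a ∈ A, ∀ b ∈ A, b ≠ a → r a b then h.choose else none

lemma pick_mem {r : Option S → Option S → Prop} {A : Finset (Option S)}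
    (h0 : (none : Option S) ∈ A) : pick r A ∈ A := by
  by_cases h : ∃ a ∈ A, ∀ b ∈ A, b ≠ a → r a b
  · rw [pick, dif_pos h]; exact h.choose_spec.1
  · rw [pick, dif_neg h]; exact h0

lemma pick_max {r : Option S → Option S → Prop} {A : Finset (Option S)}
    (hto : IsStrictTotalOrder (Option S) r) (hA : A.Nonempty) :
    ∀ b ∈ A, b ≠ pick r A → r (pick r A) b := by
  have h := exists_rmax r hto A hA
  rw [pick, dif_pos h]
  exact fun b hb hne => h.choose_spec.2 b hb hne

open Classical in
noncomputable def dec (c : Option S) (q' : S → ℕ) : S → ℕ :=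
  fun s => if c = some s then q' s - 1 else q' s

lemma dec_le (c : Option S) (q' : S → ℕ) (s : S) : dec c q' s ≤ q' s := by
  classical
  rw [dec]
  split_ifs
  · exact Nat.sub_le _ _
  · exact le_rfl

open Classical in
noncomputable def run (pI : StudentPrefs I S) : List I → (S → ℕ) → I → Option S
  | [], _ => fun _ => none
  | i :: L, q' =>
    fun j => if j = i then pick (pI i) (avail q')
      else run pI L (dec (pick (pI i) (avail q')) q') j

lemma run_nil (pI : StudentPrefs I S) (q' : S → ℕ) (j : I) : run pI [] q' j = none := rfl

lemma run_cons_self (pI : StudentPrefs I S) (i : I) (L : List I) (q' : S → ℕ) :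
    run pI (i :: L) q' i = pick (pI i) (avail q') := by
  simp [run]

lemma run_cons_ne (pI : StudentPrefs I S) {i j : I} (L : List I) (q' : S → ℕ)
    (h : j ≠ i) :
    run pI (i :: L) q' j = run pI L (dec (pick (pI i) (avail q')) q') j := by
  simp [run, h]

lemma run_not_mem (pI : StudentPrefs I S) :
    ∀ (L : List I) (q' : S → ℕ) (j : I), j ∉ L → run pI L q' j = none := by
  intro L
  induction L with
  | nil => intro q' j _; rfl
  | cons i L ih =>
    intro q' j hj
    have hji : j ≠ i := fun h => hj (h ▸ (List.mem_cons_self : i ∈ i :: L))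
    rw [run_cons_ne pI L q' hji]
    exact ih _ j (fun h => hj (List.mem_cons_of_mem i h))

lemma run_pos (pI : StudentPrefs I S) :
    ∀ (L : List I) (q' : S → ℕ) (j : I) (s : S), run pI L q' j = some s → 0 < q' s := by
  intro L
  induction L with
  | nil => intro q' j s h; simp [run_nil] at h
  | cons i L ih =>
    intro q' j s h
    by_cases hji : j = i
    · subst hji
      rw [run_cons_self] at h
      have := pick_mem (r := pI j) (none_mem_avail q')
      rw [h] at this
      exact some_mem_avail.mp this
    · rw [run_cons_ne pI L q' hji] at h
      exact lt_of_lt_of_le (ih _ j s h) (dec_le _ _ _)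

lemma run_count (pI : StudentPrefs I S) :
    ∀ (L : List I), L.Nodup → ∀ (q' : S → ℕ) (s : S),
      {j | run pI L q' j = some s}.ncard ≤ q' s := by
  intro L
  induction L with
  | nil =>
    intro _ q' s
    have : {j : I | run pI [] q' j = some s} = ∅ := by
      ext j; simp [run_nil]
    simp [this]
  | cons i L ih =>
    intro hnd q' s
    have hiL : i ∉ L := (List.nodup_cons.mp hnd).1
    have hndL : L.Nodup := (List.nodup_cons.mp hnd).2
    set c := pick (pI i) (avail q') with hc
    set q'' := dec c q' with hq''
    set T' := {j | run pI L q'' j = some s} with hT'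
    have hiT' : i ∉ T' := by
      intro h
      rw [hT', Set.mem_setOf_eq, run_not_mem pI L q'' i hiL] at h
      simp at h
    by_cases hcs : c = some s
    · have hTeq : {j | run pI (i :: L) q' j = some s} = insert i T' := by
        ext j
        by_cases hj : j = i
        · subst hj
          simp [run_cons_self, ← hc, hcs]
        · simp [run_cons_ne pI L q' hj, ← hq'', hj, hT']; exact Iff.rfl
      rw [hTeq, Set.ncard_insert_of_notMem hiT' (Set.toFinite _)]
      have h1 : 0 < q' s := by
        have := pick_mem (r := pI i) (none_mem_avail q')
        rw [← hc, hcs] at this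
        exact some_mem_avail.mp this
      have h2 : q'' s = q' s - 1 := by rw [hq'', dec]; simp [hcs]
      have h3 : T'.ncard ≤ q'' s := by rw [hT']; exact ih hndL q'' s
      omega
    · have hTeq : {j | run pI (i :: L) q' j = some s} = T' := by
        ext j
        by_cases hj : j = i
        · subst hj
          simp only [Set.mem_setOf_eq, run_cons_self, ← hc]
          constructor
          · intro h; exact absurd h hcs
          · intro h; exact absurd h hiT'
        · simp [run_cons_ne pI L q' hj, ← hq'', hT']; exact Iff.rfl
      rw [hTeq]
      have h2 : q'' s = q' s := by rw [hq'', dec]; simp [hcs]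
      rw [← h2]
      exact ih hndL q'' s

lemma sto_asymm {α : Type*} {r : α → α → Prop} (h : IsStrictTotalOrder α r)
    {a b : α} (h1 : r a b) (h2 : r b a) : False := by
  haveI := h
  exact irrefl_of r a (_root_.trans_of r h1 h2)

lemma run_pe (pI : StudentPrefs I S) (hv : ValidStudentPrefs pI) :
    ∀ (L : List I), L.Nodup → ∀ (q' : S → ℕ) (μ' : I → Option S),
      (∀ s, {j | j ∈ L ∧ μ' j = some s}.ncard ≤ q' s) →
      (∀ j ∈ L, μ' j = run pI L q' j ∨ pI j (μ' j) (run pI L q' j)) →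
      ∀ j ∈ L, μ' j = run pI L q' j := by
  intro L
  induction L with
  | nil => intro _ q' μ' _ _ j hj; exact absurd hj List.not_mem_nil
  | cons i L ih =>
    intro hnd q' μ' hcnt hdom
    have hiL : i ∉ L := (List.nodup_cons.mp hnd).1
    have hndL : L.Nodup := (List.nodup_cons.mp hnd).2
    set c := pick (pI i) (avail q') with hc
    set q'' := dec c q' with hq''
    -- μ' i ∈ avail q'
    have hmem : μ' i ∈ avail q' := by
      cases hμi : μ' i with
      | none => exact none_mem_avail q'
      | some s =>
        have h1 : i ∈ {j | j ∈ (i :: L) ∧ μ' j = some s} :=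
          ⟨List.mem_cons_self, hμi⟩
        have h2 : 0 < {j | j ∈ (i :: L) ∧ μ' j = some s}.ncard := by
          rw [Set.ncard_pos (Set.toFinite _)]
          exact ⟨i, h1⟩
        exact some_mem_avail.mpr (lt_of_lt_of_le h2 (hcnt s))
    -- μ' i = c
    have hμic : μ' i = c := by
      rcases hdom i List.mem_cons_self with h | h
      · rwa [run_cons_self, ← hc] at h
      · by_contra hne
        rw [run_cons_self, ← hc] at h
        have := pick_max (hv i) ⟨none, none_mem_avail q'⟩ (μ' i) hmem (hc ▸ hne)
        exact sto_asymm (hv i) h this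
    -- tail count
    have hcnt' : ∀ s, {j | j ∈ L ∧ μ' j = some s}.ncard ≤ q'' s := by
      intro s
      by_cases hcs : c = some s
      · have hTeq : {j | j ∈ (i :: L) ∧ μ' j = some s}
            = insert i {j | j ∈ L ∧ μ' j = some s} := by
          ext j
          by_cases hj : j = i
          · subst hj
            simp [hμic, hcs, List.mem_cons]
          · simp [List.mem_cons, hj]
        have hiT : i ∉ {j | j ∈ L ∧ μ' j = some s} := fun h => hiL h.1
        have := hcnt s
        rw [hTeq, Set.ncard_insert_of_notMem hiT (Set.toFinite _)] at this
        have h2 : q'' s = q' s - 1 := by rw [hq'', dec]; simp [hcs]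
        omega
      · have hsub : {j | j ∈ L ∧ μ' j = some s} ⊆ {j | j ∈ (i :: L) ∧ μ' j = some s} :=
          fun j hj => ⟨List.mem_cons_of_mem i hj.1, hj.2⟩
        have h2 : q'' s = q' s := by rw [hq'', dec]; simp [hcs]
        rw [h2]
        exact le_trans (Set.ncard_le_ncard hsub (Set.toFinite _)) (hcnt s)
    have hdom' : ∀ j ∈ L, μ' j = run pI L q'' j ∨ pI j (μ' j) (run pI L q'' j) := by
      intro j hj
      have hji : j ≠ i := fun h => hiL (h ▸ hj)
      have := hdom j (List.mem_cons_of_mem i hj)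
      rwa [run_cons_ne pI L q' hji, ← hc, ← hq''] at this
    intro j hj
    rcases List.mem_cons.mp hj with rfl | hj'
    · rw [run_cons_self, ← hc]; exact hμic
    · have hji : j ≠ i := fun h => hiL (h ▸ hj')
      rw [run_cons_ne pI L q' hji, ← hc, ← hq'']
      exact ih hndL q'' μ' hcnt' hdom' j hj'

lemma run_sp (pI pI' : StudentPrefs I S) :
    ∀ (L : List I) (q' : S → ℕ) (i : I), i ∈ L →
      (∀ j ∈ L, j ≠ i → pI' j = pI j) →
      ∃ A : Finset (Option S), (none : Option S) ∈ A ∧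
        run pI L q' i = pick (pI i) A ∧ run pI' L q' i ∈ A := by
  intro L
  induction L with
  | nil => intro q' i hi; exact absurd hi List.not_mem_nil
  | cons a L ih =>
    intro q' i hi hag
    by_cases hia : i = a
    · subst hia
      refine ⟨avail q', none_mem_avail q', ?_, ?_⟩
      · rw [run_cons_self]
      · rw [run_cons_self]
        exact pick_mem (none_mem_avail q')
    · have ha : pI' a = pI a := hag a List.mem_cons_self (fun h => hia h.symm)
      have hiL : i ∈ L := by
        rcases List.mem_cons.mp hi with h | h
        · exact absurd h hia
        · exact h
      rw [run_cons_ne pI L q' hia, run_cons_ne pI' L q' hia, ha]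
      exact ih _ i hiL (fun j hj => hag j (List.mem_cons_of_mem a hj))

lemma run_envy (pI : StudentPrefs I S) (hv : ValidStudentPrefs pI) (ord : I → ℕ) :
    ∀ (L : List I), List.Pairwise (fun a b => ord b < ord a) L →
      ∀ (q' : S → ℕ) (i i' : I) (s : S), i ∈ L →
        run pI L q' i' = some s → pI i (some s) (run pI L q' i) → ord i < ord i' := by
  intro L
  induction L with
  | nil => intro _ q' i i' s hi; exact absurd hi List.not_mem_nil
  | cons a L ih =>
    intro hpw q' i i' s hi hr hpref
    have hhead : ∀ b ∈ L, ord b < ord a := List.pairwise_cons.mp hpw |>.1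
    have hpwL : List.Pairwise (fun a b => ord b < ord a) L := (List.pairwise_cons.mp hpw).2
    set c := pick (pI a) (avail q') with hc
    set q'' := dec c q' with hq''
    by_cases hia : i = a
    · subst hia
      rw [run_cons_self, ← hc] at hpref
      -- some s ∉ avail q'
      have hnot : some s ∉ avail q' := by
        intro hmem
        by_cases hsc : some s = c
        · rw [hsc] at hpref
          haveI := hv i
          exact irrefl_of (pI i) c hpref
        · exact sto_asymm (hv i)
            (pick_max (hv i) ⟨none, none_mem_avail q'⟩ (some s) hmem (by rw [← hc]; exact hsc)) hpref
      have hq0 : q' s = 0 := by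
        by_contra h
        exact hnot (some_mem_avail.mpr (Nat.pos_of_ne_zero h))
      exfalso
      by_cases hi'a : i' = i
      · subst hi'a
        rw [run_cons_self, ← hc] at hr
        rw [hr] at hpref
        haveI := hv i'
        exact irrefl_of (pI i') (some s) hpref
      · rw [run_cons_ne pI L q' hi'a, ← hc, ← hq''] at hr
        have h1 : 0 < q'' s := run_pos pI L q'' i' s hr
        have h2 : q'' s ≤ q' s := dec_le c q' s
        omega
    · have hiL : i ∈ L := by
        rcases List.mem_cons.mp hi with h | h
        · exact absurd h hia
        · exact h
      rw [run_cons_ne pI L q' hia, ← hc, ← hq''] at hpref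
      by_cases hi'a : i' = a
      · subst hi'a
        exact hhead i hiL
      · rw [run_cons_ne pI L q' hi'a, ← hc, ← hq''] at hr
        exact ih hpwL q'' i i' s hiL hr hpref

end Aux

theorem sp_pe_locef_mechanism_degenerate {I S : Type*} [Fintype I] [Fintype S] [Nonempty I]
    (k : ℕ) (G : SimpleGraph I) (hdeg : Degenerate G k)
    (pS : SchoolPrefs I S) (q : S → ℕ) (hpS : ValidSchoolPrefs pS) :
    ∃ f : StudentPrefs I S → (I → Option S),
      (∀ pI, ValidStudentPrefs pI → Feasible q (f pI)) ∧
      Strategyproof f ∧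
      ∀ pI, ValidStudentPrefs pI →
        ParetoEfficient pI q (f pI) ∧ LocEF G pI pS k (f pI) := by
  classical
  obtain ⟨ord, hinj, hk⟩ := hdeg
  let r : I → I → Prop := fun i j => ord j ≤ ord i
  haveI : DecidableRel r := fun i j => inferInstanceAs (Decidable (ord j ≤ ord i))
  haveI : IsTrans I r := ⟨fun a b c h1 h2 => le_trans h2 h1⟩
  haveI : IsAntisymm I r := ⟨fun a b h1 h2 => hinj (le_antisymm h2 h1)⟩
  haveI : IsTotal I r := ⟨fun a b => (le_total (ord b) (ord a)).imp id id⟩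
  set L : List I := Finset.univ.sort r with hL
  have hnd : L.Nodup := Finset.sort_nodup Finset.univ r
  have hmem : ∀ i : I, i ∈ L := fun i => (Finset.mem_sort r).mpr (Finset.mem_univ i)
  have hpair : List.Pairwise (fun a b => ord b < ord a) L := by
    have h1 : List.Pairwise r L := Finset.pairwise_sort Finset.univ r
    have h2 : List.Pairwise (· ≠ ·) L := hnd
    exact (h1.and h2).imp (fun {a b} h =>
      lt_of_le_of_ne h.1 (fun e => h.2 (hinj e.symm)))
  refine ⟨fun pI => run pI L q, ?_, ?_, ?_⟩
  · -- feasibility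
    intro pI _ s
    exact run_count pI L hnd q s
  · -- strategyproofness
    intro pI hvI i pI' _ hag
    show run pI L q i = run pI' L q i ∨ pI i (run pI L q i) (run pI' L q i)
    obtain ⟨A, h0, hEq, hmem'⟩ := run_sp pI pI' L q i (hmem i)
      (fun j _ hj => hag j hj)
    by_cases heq : run pI L q i = run pI' L q i
    · exact Or.inl heq
    · right
      rw [hEq]
      refine pick_max (hvI i) ⟨none, h0⟩ _ hmem' ?_
      rw [← hEq]
      exact fun h => heq h.symm
  · -- PE and LocEF
    intro pI hvI
    constructor
    · intro μ' hfe ⟨hdom, i0, hstrict⟩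
      have hcnt : ∀ s, {j | j ∈ L ∧ μ' j = some s}.ncard ≤ q s := by
        intro s
        have : {j | j ∈ L ∧ μ' j = some s} = {j | μ' j = some s} := by
          ext j; simp [hmem j]
        rw [this]
        exact hfe s
      have := run_pe pI hvI L hnd q μ' hcnt (fun j _ => hdom j) i0 (hmem i0)
      rw [this] at hstrict
      haveI := hvI i0
      exact irrefl_of (pI i0) _ hstrict
    · intro i
      have hsub : {i' | LocalEnvy G pI pS (run pI L q) i i'}
          ⊆ {i' | G.Adj i i' ∧ ord i < ord i'} := by
        rintro i' ⟨⟨s, hμ, hpref, _⟩, hadj⟩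
        exact ⟨hadj, run_envy pI hvI ord L hpair q i i' s (hmem i) hμ hpref⟩
      exact le_trans (Set.ncard_le_ncard hsub (Set.toFinite _)) (hk i)
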